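/- There is an absolute constant C > 0 such that for every r > 0 and every t ≥ 0, |C₁(r,t)| ≤ C / r. -/

import Mathlib

/-- The Bessel function of the first kind of integer order `n`, defined via the
integral representation `J_n(x) = (1/(2π)) ∫_{-π}^{π} e^{i(n s + x sin s)} ds`. -/
noncomputable def besselJ (n : ℤ) (x : ℝ) : ℝ :=
  (1 / (2 * Real.pi)) *
    (∫ s in (-Real.pi)..Real.pi,
      Complex.exp (Complex.I * ((n : ℂ) * (s : ℂ) + (x : ℂ) * (Real.sin s : ℂ)))).re

/-- The radial integral kernel of the free Klein–Gordon cosine propagator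
`cos(t√(−Δ+1))/(−Δ+1)` on `ℝ³`:
`C₁(r,t) = (1/(4π)) ( r⁻¹ 𝟙_{t<r} − ∫_{max(t,r)}^∞ J_1(√(τ²−r²))/√(τ²−r²) dτ )`. -/
noncomputable def C1 (r t : ℝ) : ℝ :=
  (1 / (4 * Real.pi)) *
    ((if t < r then r⁻¹ else 0) -
      ∫ τ in Set.Ioi (max t r),
        besselJ 1 (Real.sqrt (τ ^ 2 - r ^ 2)) / Real.sqrt (τ ^ 2 - r ^ 2))

open MeasureTheory intervalIntegral Set Metric Complex in
lemma aux_abs_exp_I_mul_ofReal (a : ℝ) : ‖Complex.exp (Complex.I * (a : ℂ))‖ = 1 := by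
  rw [mul_comm]
  exact Complex.norm_exp_ofReal_mul_I a

open MeasureTheory intervalIntegral Set Metric Complex in
lemma aux_norm_exp_I_mul_ofReal (a : ℝ) : ‖Complex.exp (Complex.I * (a : ℂ))‖ = 1 := by
  exact aux_abs_exp_I_mul_ofReal a

open MeasureTheory intervalIntegral Set Metric Complex in
lemma aux_besselJ_abs_le_one (n : ℤ) (x : ℝ) : |besselJ n x| ≤ 1 := by
  have hnorm : ‖∫ s in (-Real.pi)..Real.pi,
      Complex.exp (Complex.I * ((n : ℂ) * (s : ℂ) + (x : ℂ) * (Real.sin s : ℂ)))‖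
      ≤ 1 * |Real.pi - -Real.pi| := by
    apply intervalIntegral.norm_integral_le_of_norm_le_const
    intro s _
    have : Complex.I * ((n : ℂ) * (s : ℂ) + (x : ℂ) * (Real.sin s : ℂ))
        = Complex.I * (((n : ℝ) * s + x * Real.sin s : ℝ) : ℂ) := by push_cast; ring
    rw [this, aux_norm_exp_I_mul_ofReal]
  have hpi : (0:ℝ) < Real.pi := Real.pi_pos
  have h2 : |Real.pi - -Real.pi| = 2 * Real.pi := by
    rw [abs_eq_self.mpr (by linarith)]; ring
  rw [besselJ, abs_mul]
  have hre : |(∫ s in (-Real.pi)..Real.pi,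
      Complex.exp (Complex.I * ((n : ℂ) * (s : ℂ) + (x : ℂ) * (Real.sin s : ℂ)))).re|
      ≤ 2 * Real.pi := by
    calc |(∫ s in (-Real.pi)..Real.pi,
        Complex.exp (Complex.I * ((n : ℂ) * (s : ℂ) + (x : ℂ) * (Real.sin s : ℂ)))).re|
        ≤ ‖∫ s in (-Real.pi)..Real.pi,
          Complex.exp (Complex.I * ((n : ℂ) * (s : ℂ) + (x : ℂ) * (Real.sin s : ℂ)))‖ :=
        Complex.abs_re_le_norm _
      _ ≤ 2 * Real.pi := by rw [← h2]; simpa using hnorm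
  have h1 : |1 / (2 * Real.pi)| = 1 / (2 * Real.pi) := abs_of_nonneg (by positivity)
  rw [h1]
  rw [div_mul_eq_mul_div, one_mul, div_le_one (by positivity)]
  linarith [hre]

open MeasureTheory intervalIntegral Set Metric Complex in
lemma aux_integral_cos_mul_exp (x : ℝ) :
    (∫ s in (-Real.pi)..Real.pi,
      ((Real.cos s : ℂ) * Complex.exp (Complex.I * ((x : ℂ) * (Real.sin s : ℂ))))) = 0 := by
  by_cases hx : x = 0
  · subst hx
    simp only [Complex.ofReal_zero, zero_mul, mul_zero, Complex.exp_zero, mul_one]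
    rw [intervalIntegral.integral_ofReal]
    norm_cast
    simp [integral_cos]
  · have hIx : Complex.I * (x : ℂ) ≠ 0 := by
      simp [Complex.I_ne_zero, Complex.ofReal_eq_zero, hx]
    have hderiv : ∀ s : ℝ, HasDerivAt
        (fun s : ℝ => Complex.exp (Complex.I * ((x : ℂ) * (Real.sin s : ℂ))) / (Complex.I * (x:ℂ)))
        ((Real.cos s : ℂ) * Complex.exp (Complex.I * ((x : ℂ) * (Real.sin s : ℂ)))) s := by
      intro s
      have h1 : HasDerivAt (fun s : ℝ => Complex.I * ((x : ℂ) * (Real.sin s : ℂ)))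
          (Complex.I * ((x : ℂ) * (Real.cos s : ℂ))) s := by
        exact (((Real.hasDerivAt_sin s).ofReal_comp).const_mul (x:ℂ)).const_mul Complex.I
      have h2 := h1.cexp
      have h3 := h2.div_const (Complex.I * (x:ℂ))
      convert h3 using 1
      · rfl
      rw [eq_div_iff hIx]
      ring
    have hcont : Continuous fun s : ℝ =>
        (Real.cos s : ℂ) * Complex.exp (Complex.I * ((x : ℂ) * (Real.sin s : ℂ))) := by
      fun_prop
    rw [intervalIntegral.integral_eq_sub_of_hasDerivAt (fun s _ => hderiv s)
      (hcont.intervalIntegrable _ _)]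
    simp [Real.sin_pi, Real.sin_neg]

open MeasureTheory intervalIntegral Set Metric Complex in
lemma aux_besselJ_one_eq (x : ℝ) :
    besselJ 1 x = (1 / (2 * Real.pi)) *
      (∫ s in (-Real.pi)..Real.pi,
        Complex.I * (Real.sin s : ℂ) *
          Complex.exp (Complex.I * ((x : ℂ) * (Real.sin s : ℂ)))).re := by
  rw [besselJ]
  congr 2
  have hsplit : ∀ s : ℝ,
      Complex.exp (Complex.I * (((1:ℤ) : ℂ) * (s : ℂ) + (x : ℂ) * (Real.sin s : ℂ)))
      = (Real.cos s : ℂ) * Complex.exp (Complex.I * ((x : ℂ) * (Real.sin s : ℂ)))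
        + Complex.I * (Real.sin s : ℂ) * Complex.exp (Complex.I * ((x : ℂ) * (Real.sin s : ℂ))) := by
    intro s
    have : Complex.I * (((1:ℤ) : ℂ) * (s : ℂ) + (x : ℂ) * (Real.sin s : ℂ))
        = (s : ℂ) * Complex.I + Complex.I * ((x : ℂ) * (Real.sin s : ℂ)) := by push_cast; ring
    rw [this, Complex.exp_add, Complex.exp_mul_I]
    rw [← Complex.ofReal_cos, ← Complex.ofReal_sin]
    ring
  rw [intervalIntegral.integral_congr (fun s _ => hsplit s)]
  have hc1 : Continuous fun s : ℝ =>
      (Real.cos s : ℂ) * Complex.exp (Complex.I * ((x : ℂ) * (Real.sin s : ℂ))) := by fun_prop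
  have hc2 : Continuous fun s : ℝ =>
      Complex.I * (Real.sin s : ℂ) * Complex.exp (Complex.I * ((x : ℂ) * (Real.sin s : ℂ))) := by
    fun_prop
  rw [intervalIntegral.integral_add (hc1.intervalIntegrable _ _) (hc2.intervalIntegrable _ _),
    aux_integral_cos_mul_exp, zero_add]

open MeasureTheory intervalIntegral Set Metric Complex in
lemma aux_hasDerivAt_besselJ_zero (x : ℝ) :
    HasDerivAt (besselJ 0) (besselJ 1 x) x := by
  have hb0 : besselJ 0 = fun y : ℝ => (1 / (2 * Real.pi)) *
      (∫ s in (-Real.pi)..Real.pi,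
        Complex.exp (Complex.I * ((y : ℂ) * (Real.sin s : ℂ)))).re := by
    funext y
    rw [besselJ]
    norm_num
  rw [hb0]
  set F : ℝ → ℝ → ℂ := fun y s => Complex.exp (Complex.I * ((y : ℂ) * (Real.sin s : ℂ))) with hF
  set F' : ℝ → ℝ → ℂ := fun y s =>
    Complex.I * (Real.sin s : ℂ) * Complex.exp (Complex.I * ((y : ℂ) * (Real.sin s : ℂ))) with hF'
  have hcontF : ∀ y : ℝ, Continuous (F y) := by intro y; rw [hF]; fun_prop
  have hcontF' : ∀ y : ℝ, Continuous (F' y) := by intro y; rw [hF']; fun_prop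
  have hdiff : ∀ (s : ℝ) (y : ℝ), HasDerivAt (fun y => F y s) (F' y s) y := by
    intro s y
    have h1 : HasDerivAt (fun z : ℂ => Complex.I * (z * (Real.sin s : ℂ)))
        (Complex.I * (Real.sin s : ℂ)) (y : ℂ) := by
      simpa using ((hasDerivAt_id (y:ℂ)).mul_const (Real.sin s : ℂ)).const_mul Complex.I
    have h2 := h1.cexp
    have h3 := h2.comp_ofReal
    simpa [hF, hF', mul_comm] using h3
  have key : HasDerivAt (fun y => ∫ s in (-Real.pi)..Real.pi, F y s)
      (∫ s in (-Real.pi)..Real.pi, F' x s) x := by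
    have := intervalIntegral.hasDerivAt_integral_of_dominated_loc_of_deriv_le
      (F := F) (F' := F') (x₀ := x) (a := -Real.pi) (b := Real.pi) (μ := volume)
      (bound := fun _ => 1) (Metric.ball_mem_nhds x one_pos)
      (Filter.Eventually.of_forall fun y => (hcontF y).aestronglyMeasurable)
      ((hcontF x).intervalIntegrable _ _)
      ((hcontF' x).aestronglyMeasurable)
      (Filter.Eventually.of_forall fun s => fun _ y _ => ?_)
      (by simpa using (continuous_const (y := (1:ℝ))).intervalIntegrable (-Real.pi) Real.pi)
      (Filter.Eventually.of_forall fun s => fun _ y _ => hdiff s y)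
    · exact this.2
    · -- bound on ‖F' y s‖
      have : Complex.I * ((y : ℂ) * (Real.sin s : ℂ))
          = Complex.I * ((y * Real.sin s : ℝ) : ℂ) := by push_cast; ring
      rw [hF']
      simp only [norm_mul, this, mul_one, Real.norm_eq_abs,
        Complex.norm_I, one_mul, Complex.norm_real, aux_abs_exp_I_mul_ofReal]
      exact abs_le.mpr ⟨Real.neg_one_le_sin s, Real.sin_le_one s⟩
  have hre := Complex.reCLM.hasFDerivAt.comp_hasDerivAt x key
  have hfinal := hre.const_mul (1 / (2 * Real.pi))
  rw [aux_besselJ_one_eq]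
  exact hfinal

open MeasureTheory intervalIntegral Set in
lemma aux_continuous_besselJ_zero : Continuous (besselJ 0) :=
  continuous_iff_continuousAt.mpr fun x => (aux_hasDerivAt_besselJ_zero x).continuousAt

open MeasureTheory intervalIntegral Set Filter in
lemma aux_integral_bound (r a : ℝ) (hr : 0 < r) (har : r ≤ a) :
    |∫ τ in Set.Ioi a, besselJ 1 (Real.sqrt (τ ^ 2 - r ^ 2)) / Real.sqrt (τ ^ 2 - r ^ 2)|
      ≤ 2 / r := by
  have ha : 0 < a := lt_of_lt_of_le hr har
  set h : ℝ → ℝ := fun τ => besselJ 1 (Real.sqrt (τ ^ 2 - r ^ 2)) / Real.sqrt (τ ^ 2 - r ^ 2)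
    with hh
  by_cases hint : IntegrableOn h (Set.Ioi a)
  swap
  · rw [MeasureTheory.integral_undef hint]
    simpa using by positivity
  set g : ℝ → ℝ := fun τ => besselJ 0 (Real.sqrt (τ ^ 2 - r ^ 2)) with hg
  have hgc : Continuous g := aux_continuous_besselJ_zero.comp (by fun_prop)
  have hIcc : ∀ B, a ≤ B → |∫ τ in a..B, h τ| ≤ 2 / a := by
    intro B hB
    have hBpos : 0 < B := lt_of_lt_of_le ha hB
    set F : ℝ → ℝ := fun τ => g τ / τ with hFdef
    have hFcont : ContinuousOn F (Set.Icc a B) :=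
      hgc.continuousOn.div continuousOn_id fun τ hτ => ne_of_gt (lt_of_lt_of_le ha hτ.1)
    have hderiv : ∀ τ ∈ Set.Ioo a B, HasDerivWithinAt F (h τ - g τ / τ ^ 2) (Set.Ioi τ) τ := by
      intro τ hτ
      have hτa : a < τ := hτ.1
      have hτpos : 0 < τ := lt_trans ha hτa
      have hpos : 0 < τ ^ 2 - r ^ 2 := by nlinarith [lt_of_le_of_lt har hτa]
      have hupos : 0 < Real.sqrt (τ ^ 2 - r ^ 2) := Real.sqrt_pos.mpr hpos
      have hu' : HasDerivAt (fun τ : ℝ => Real.sqrt (τ ^ 2 - r ^ 2))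
          ((2 * τ ^ 1) / (2 * Real.sqrt (τ ^ 2 - r ^ 2))) τ :=
        ((hasDerivAt_pow 2 τ).sub_const (r ^ 2)).sqrt (ne_of_gt hpos)
      have hgd : HasDerivAt g (besselJ 1 (Real.sqrt (τ ^ 2 - r ^ 2)) *
          ((2 * τ ^ 1) / (2 * Real.sqrt (τ ^ 2 - r ^ 2)))) τ :=
        by have := (aux_hasDerivAt_besselJ_zero (Real.sqrt (τ ^ 2 - r ^ 2))).comp τ hu'; exact this
      have hFd : HasDerivAt F ((besselJ 1 (Real.sqrt (τ ^ 2 - r ^ 2)) *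
          ((2 * τ ^ 1) / (2 * Real.sqrt (τ ^ 2 - r ^ 2))) * τ - g τ * 1) / τ ^ 2) τ :=
        hgd.div (hasDerivAt_id τ) (ne_of_gt hτpos)
      have heq : (besselJ 1 (Real.sqrt (τ ^ 2 - r ^ 2)) *
          ((2 * τ ^ 1) / (2 * Real.sqrt (τ ^ 2 - r ^ 2))) * τ - g τ * 1) / τ ^ 2
          = h τ - g τ / τ ^ 2 := by
        rw [hh]
        field_simp
      rw [heq] at hFd
      exact hFd.hasDerivWithinAt
    have hih : IntervalIntegrable h volume a B := by
      rw [intervalIntegrable_iff_integrableOn_Ioc_of_le hB]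
      exact hint.mono_set Set.Ioc_subset_Ioi_self
    have hig : IntervalIntegrable (fun τ => g τ / τ ^ 2) volume a B := by
      apply ContinuousOn.intervalIntegrable
      rw [Set.uIcc_of_le hB]
      exact hgc.continuousOn.div (by fun_prop)
        fun τ hτ => pow_ne_zero 2 (ne_of_gt (lt_of_lt_of_le ha hτ.1))
    have hftc : ∫ τ in a..B, (h τ - g τ / τ ^ 2) = F B - F a :=
      intervalIntegral.integral_eq_sub_of_hasDeriv_right_of_le hB hFcont hderiv (hih.sub hig)
    rw [intervalIntegral.integral_sub hih hig] at hftc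
    have hsum : ∫ τ in a..B, h τ = F B - F a + ∫ τ in a..B, g τ / τ ^ 2 := by linarith
    have hinvint : IntervalIntegrable (fun τ : ℝ => (τ ^ 2)⁻¹) volume a B := by
      apply ContinuousOn.intervalIntegrable
      rw [Set.uIcc_of_le hB]
      exact ContinuousOn.inv₀ (by fun_prop)
        fun τ hτ => pow_ne_zero 2 (ne_of_gt (lt_of_lt_of_le ha hτ.1))
    have hinv : ∫ τ in a..B, (τ ^ 2)⁻¹ = a⁻¹ - B⁻¹ := by
      have hd : ∀ τ ∈ Set.uIcc a B, HasDerivAt (fun y : ℝ => -(y⁻¹)) ((τ ^ 2)⁻¹) τ := by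
        intro τ hτ
        rw [Set.uIcc_of_le hB] at hτ
        have hτ0 : τ ≠ 0 := ne_of_gt (lt_of_lt_of_le ha hτ.1)
        simpa using (hasDerivAt_inv hτ0).fun_neg
      rw [intervalIntegral.integral_eq_sub_of_hasDerivAt hd hinvint]
      ring
    have hb2 : |∫ τ in a..B, g τ / τ ^ 2| ≤ a⁻¹ - B⁻¹ := by
      have hbd : ∀ᵐ τ ∂(volume.restrict (Set.uIoc a B)), ‖g τ / τ ^ 2‖ ≤ (τ ^ 2)⁻¹ := by
        rw [ae_restrict_iff' measurableSet_uIoc]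
        refine Filter.Eventually.of_forall fun τ hτ => ?_
        rw [Set.uIoc_of_le hB] at hτ
        have hτpos : 0 < τ := lt_trans ha hτ.1
        have h1 : |g τ| ≤ 1 := aux_besselJ_abs_le_one _ _
        rw [Real.norm_eq_abs, abs_div, abs_pow, abs_of_pos hτpos]
        rw [div_le_iff₀ (by positivity), inv_mul_cancel₀ (by positivity)]
        exact h1
      have := intervalIntegral.norm_integral_le_abs_of_norm_le hbd hinvint
      rw [hinv] at this
      have hba : B⁻¹ ≤ a⁻¹ := by
        rw [inv_le_inv₀ (by positivity) (by positivity)]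
        exact hB
      calc |∫ τ in a..B, g τ / τ ^ 2| = ‖∫ τ in a..B, g τ / τ ^ 2‖ := (Real.norm_eq_abs _).symm
        _ ≤ |a⁻¹ - B⁻¹| := this
        _ = a⁻¹ - B⁻¹ := abs_of_nonneg (by linarith)
    have hFBb : |F B| ≤ B⁻¹ := by
      rw [hFdef]
      dsimp only
      rw [abs_div, abs_of_pos hBpos, div_le_iff₀ (by positivity),
        inv_mul_cancel₀ (ne_of_gt hBpos)]
      exact aux_besselJ_abs_le_one _ _
    have hFab : |F a| ≤ a⁻¹ := by
      rw [hFdef]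
      dsimp only
      rw [abs_div, abs_of_pos ha, div_le_iff₀ (by positivity),
        inv_mul_cancel₀ (ne_of_gt ha)]
      exact aux_besselJ_abs_le_one _ _
    rw [hsum]
    have htri : |F B - F a + ∫ τ in a..B, g τ / τ ^ 2|
        ≤ |F B| + |F a| + |∫ τ in a..B, g τ / τ ^ 2| := by
      calc |F B - F a + ∫ τ in a..B, g τ / τ ^ 2|
          ≤ |F B - F a| + |∫ τ in a..B, g τ / τ ^ 2| := abs_add_le _ _
        _ ≤ |F B| + |F a| + |∫ τ in a..B, g τ / τ ^ 2| := by
            gcongr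
            exact abs_sub _ _
    have h2a : 2 / a = a⁻¹ + a⁻¹ := by rw [div_eq_mul_inv]; ring
    linarith
  have hlim := MeasureTheory.intervalIntegral_tendsto_integral_Ioi a hint tendsto_id
  have habs := hlim.abs
  have hle : |∫ τ in Set.Ioi a, h τ| ≤ 2 / a :=
    le_of_tendsto habs (Filter.eventually_atTop.mpr ⟨a, fun B hB => hIcc B hB⟩)
  calc |∫ τ in Set.Ioi a, h τ| ≤ 2 / a := hle
    _ ≤ 2 / r := by gcongr

/-- There is an absolute constant `C > 0` such that for every `r > 0` and every `t ≥ 0`,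
`|C₁(r,t)| ≤ C / r`. -/
theorem C1_pointwise_r_bound :
    ∃ C : ℝ, 0 < C ∧ ∀ r t : ℝ, 0 < r → 0 ≤ t → |C1 r t| ≤ C / r := by
  refine ⟨1, one_pos, fun r t hr ht => ?_⟩
  have hI := aux_integral_bound r (max t r) hr (le_max_right t r)
  have hind : |(if t < r then r⁻¹ else 0)| ≤ r⁻¹ := by
    split_ifs
    · exact le_of_eq (abs_of_nonneg (inv_nonneg.mpr hr.le))
    · simpa using inv_nonneg.mpr hr.le
  have hpi := Real.pi_gt_three
  rw [C1, abs_mul, abs_of_nonneg (by positivity : (0:ℝ) ≤ 1 / (4 * Real.pi))]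
  have htri : |(if t < r then r⁻¹ else 0) -
      ∫ τ in Set.Ioi (max t r),
        besselJ 1 (Real.sqrt (τ ^ 2 - r ^ 2)) / Real.sqrt (τ ^ 2 - r ^ 2)| ≤ 3 / r := by
    calc |(if t < r then r⁻¹ else 0) -
        ∫ τ in Set.Ioi (max t r),
          besselJ 1 (Real.sqrt (τ ^ 2 - r ^ 2)) / Real.sqrt (τ ^ 2 - r ^ 2)|
        ≤ |(if t < r then r⁻¹ else 0)| +
          |∫ τ in Set.Ioi (max t r),
            besselJ 1 (Real.sqrt (τ ^ 2 - r ^ 2)) / Real.sqrt (τ ^ 2 - r ^ 2)| := abs_sub _ _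
      _ ≤ r⁻¹ + 2 / r := add_le_add hind hI
      _ = 3 / r := by rw [inv_eq_one_div]; ring
  calc (1 / (4 * Real.pi)) * |(if t < r then r⁻¹ else 0) -
      ∫ τ in Set.Ioi (max t r),
        besselJ 1 (Real.sqrt (τ ^ 2 - r ^ 2)) / Real.sqrt (τ ^ 2 - r ^ 2)|
      ≤ (1 / (4 * Real.pi)) * (3 / r) := by
        gcongr
    _ ≤ 1 / r := by
        rw [div_mul_div_comm, one_mul, div_le_div_iff₀ (by positivity) hr]
        nlinarith [hr, hpi]
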